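/- Let A, B, C be pairwise disjoint nonempty sets of sizes a, b, c and let p_{AB} be as in the equidistant case. Then the vector −p_{AB} satisfies the UPGMA tie-and-minimality conditions: (1/(ac))·Σ_{i∈A,j∈C}(−p_{AB})_{ij} = (1/(bc))·Σ_{k∈B,ℓ∈C}(−p_{AB})_{kℓ} = −ab/(ab+ac+bc), and (1/(ab))·Σ_{m∈A,n∈B}(−p_{AB})_{mn} = (ac+bc)/(ab+ac+bc), so in particular the common AC/BC average is strictly less than the AB average. -/

import Mathlib

open Finset
open scoped Classical

variable {X : Type*} [Fintype X] [DecidableEq X]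

/-- Split pseudometric: coordinate at pair s is 1 if s meets both U and V, else 0. -/
noncomputable def splitDelta (U V : Finset X) : EuclideanSpace ℝ (Sym2 X) :=
  WithLp.toLp 2 fun s => if (∃ i ∈ s, i ∈ U) ∧ (∃ j ∈ s, j ∈ V) then 1 else 0

lemma splitDelta_eval (U V : Finset X) (i j : X) :
    splitDelta U V s(i, j) =
      if (i ∈ U ∨ j ∈ U) ∧ (i ∈ V ∨ j ∈ V) then 1 else 0 := by
  simp [splitDelta, Sym2.mem_iff, exists_or, or_comm]

/-- −p_{AB} satisfies the UPGMA tie-and-minimality conditions: the averages of its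
coordinates over A×C and over B×C both equal −ab/(ab+ac+bc), the average over A×B equals
(ac+bc)/(ab+ac+bc), and the former is strictly less than the latter. -/
theorem neg_pAB_upgma_conditions (A B C : Finset X)
    (hA : A.Nonempty) (hB : B.Nonempty) (hC : C.Nonempty)
    (hAB : Disjoint A B) (hAC : Disjoint A C) (hBC : Disjoint B C) :
    let a : ℝ := A.card; let b : ℝ := B.card; let c : ℝ := C.card
    let pAB := ((-(a * c + b * c) / (a * b + a * c + b * c)) • splitDelta A B +
        (a * b / (a * b + a * c + b * c)) • (splitDelta A C + splitDelta B C) :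
        EuclideanSpace ℝ (Sym2 X))
    (1 / (a * c)) * (∑ i ∈ A, ∑ j ∈ C, (-pAB) s(i, j)) =
        -(a * b) / (a * b + a * c + b * c) ∧
    (1 / (b * c)) * (∑ k ∈ B, ∑ l ∈ C, (-pAB) s(k, l)) =
        -(a * b) / (a * b + a * c + b * c) ∧
    (1 / (a * b)) * (∑ m ∈ A, ∑ n ∈ B, (-pAB) s(m, n)) =
        (a * c + b * c) / (a * b + a * c + b * c) ∧
    -(a * b) / (a * b + a * c + b * c) <
        (a * c + b * c) / (a * b + a * c + b * c) := by
  intro a b c pAB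
  have ha : (0:ℝ) < a := by show (0:ℝ) < (A.card:ℝ); exact_mod_cast Finset.card_pos.mpr hA
  have hb : (0:ℝ) < b := by show (0:ℝ) < (B.card:ℝ); exact_mod_cast Finset.card_pos.mpr hB
  have hc : (0:ℝ) < c := by show (0:ℝ) < (C.card:ℝ); exact_mod_cast Finset.card_pos.mpr hC
  have hd : (0:ℝ) < a * b + a * c + b * c := by positivity
  have h1 : ∀ i ∈ A, ∀ j ∈ C, (-pAB) s(i, j) = -(a * b) / (a * b + a * c + b * c) := by
    intro i hi j hj
    have hiB : i ∉ B := Finset.disjoint_left.mp hAB hi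
    have hjB : j ∉ B := fun h => Finset.disjoint_left.mp hBC h hj
    have hjA : j ∉ A := fun h => Finset.disjoint_left.mp hAC h hj
    have hiC : i ∉ C := Finset.disjoint_left.mp hAC hi
    show -(pAB s(i,j)) = _
    simp only [pAB, PiLp.add_apply, PiLp.smul_apply, splitDelta_eval, smul_eq_mul]
    simp [hi, hj, hiB, hjB, hjA, hiC]
    ring
  have h2 : ∀ i ∈ B, ∀ j ∈ C, (-pAB) s(i, j) = -(a * b) / (a * b + a * c + b * c) := by
    intro i hi j hj
    have hiA : i ∉ A := fun h => Finset.disjoint_left.mp hAB h hi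
    have hjB : j ∉ B := fun h => Finset.disjoint_left.mp hBC h hj
    have hjA : j ∉ A := fun h => Finset.disjoint_left.mp hAC h hj
    have hiC : i ∉ C := Finset.disjoint_left.mp hBC hi
    show -(pAB s(i,j)) = _
    simp only [pAB, PiLp.add_apply, PiLp.smul_apply, splitDelta_eval, smul_eq_mul]
    simp [hi, hj, hiA, hjB, hjA, hiC]
    ring
  have h3 : ∀ i ∈ A, ∀ j ∈ B, (-pAB) s(i, j) = (a * c + b * c) / (a * b + a * c + b * c) := by
    intro i hi j hj
    have hiB : i ∉ B := Finset.disjoint_left.mp hAB hi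
    have hjA : j ∉ A := fun h => Finset.disjoint_left.mp hAB h hj
    have hjC : j ∉ C := Finset.disjoint_left.mp hBC hj
    have hiC : i ∉ C := Finset.disjoint_left.mp hAC hi
    show -(pAB s(i,j)) = _
    simp only [pAB, PiLp.add_apply, PiLp.smul_apply, splitDelta_eval, smul_eq_mul]
    simp [hi, hj, hiB, hjA, hjC, hiC]
    ring
  refine ⟨?_, ?_, ?_, ?_⟩
  · rw [Finset.sum_congr rfl (fun i hi => Finset.sum_congr rfl (h1 i hi))]
    simp only [Finset.sum_const, nsmul_eq_mul]
    field_simp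
    ring
  · rw [Finset.sum_congr rfl (fun i hi => Finset.sum_congr rfl (h2 i hi))]
    simp only [Finset.sum_const, nsmul_eq_mul]
    field_simp
    ring
  · rw [Finset.sum_congr rfl (fun i hi => Finset.sum_congr rfl (h3 i hi))]
    simp only [Finset.sum_const, nsmul_eq_mul]
    field_simp
    ring
  · apply div_lt_div_of_pos_right ?_ hd |>.trans_le le_rfl
    nlinarith
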